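/- Let n be a positive integer and let G be a pure (2n)-sparse gapset with genus g = 3n+1 and depth q. Then q ≤ 4. -/

import Mathlib

/-- A gapset: a finite set of positive integers such that whenever `z ∈ G`
and `z = x + y` with `x, y` positive, then `x ∈ G` or `y ∈ G`. -/
def IsGapset (G : Finset ℕ) : Prop :=
  0 ∉ G ∧ ∀ z ∈ G, ∀ x y : ℕ, 0 < x → 0 < y → z = x + y → x ∈ G ∨ y ∈ G

/-- The multiplicity of a gapset: the least positive integer not in `G`. -/
noncomputable def mult (G : Finset ℕ) : ℕ := sInf {s : ℕ | 0 < s ∧ s ∉ G}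

/-- `a` and `b` are consecutive elements of `G` (in the natural order). -/
def Consec (G : Finset ℕ) (a b : ℕ) : Prop :=
  a ∈ G ∧ b ∈ G ∧ a < b ∧ ∀ c ∈ G, c ≤ a ∨ b ≤ c

/-- `G` is pure `κ`-sparse: all consecutive differences are at most `κ`
and some consecutive difference equals `κ`. -/
def PureSparse (κ : ℕ) (G : Finset ℕ) : Prop :=
  (∀ a b, Consec G a b → b - a ≤ κ) ∧ (∃ a b, Consec G a b ∧ b - a = κ)

/-- The Frobenius number (largest element) of a gapset. -/
def frob (G : Finset ℕ) : ℕ := G.sup id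

/-- The depth of a gapset: `⌈c/m⌉` where `c = frob G + 1` is the conductor. -/
noncomputable def depth (G : Finset ℕ) : ℕ := (frob G + mult G) / mult G

/-- `x` is a pseudo-Frobenius number of `G`. -/
def PseudoFrob (G : Finset ℕ) (x : ℕ) : Prop :=
  x ∈ G ∧ ∀ s : ℕ, 0 < s → s ∉ G → x + s ∉ G

theorem stmt10 (n : ℕ) (hn : 0 < n) (G : Finset ℕ) (hG : IsGapset G)
    (hps : PureSparse (2 * n) G) (hcard : G.card = 3 * n + 1) :
    depth G ≤ 4 := by
  classical
  have hGne : G.Nonempty := Finset.card_pos.mp (by omega)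
  set f := frob G with hf
  have hle : ∀ x ∈ G, x ≤ f := fun x hx => Finset.le_sup (f := id) hx
  have hfG : f ∈ G := by
    obtain ⟨x, hx, hmax⟩ := G.exists_max_image id hGne
    have : f = x := le_antisymm (Finset.sup_le hmax) (Finset.le_sup (f := id) hx)
    rwa [this]
  -- multiplicity basics
  set m := mult G with hm
  have hSne : (f + 1) ∈ {s : ℕ | 0 < s ∧ s ∉ G} := by
    refine ⟨Nat.succ_pos _, fun h => ?_⟩
    have := hle _ h; omega
  have hmmem : 0 < m ∧ m ∉ G := Nat.sInf_mem ⟨f + 1, hSne⟩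
  -- small positive integers below 2n are gaps
  obtain ⟨a, b, ⟨haG, hbG, hab, hcons⟩, hdiff⟩ := hps.2
  have ha1 : 0 < a := by
    rcases Nat.eq_zero_or_pos a with h | h
    · exact absurd (h ▸ haG) hG.1
    · exact h
  have hsmall : ∀ i : ℕ, 0 < i → i < 2 * n → i ∈ G := by
    intro i hi hi2
    have hbi : b - i ∉ G := by
      intro hc
      rcases hcons _ hc with h | h <;> omega
    rcases hG.2 b hbG (b - i) i (by omega) hi (by omega) with h | h
    · exact absurd h hbi
    · exact h
  have hm2n : 2 * n ≤ m := by
    by_contra h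
    exact hmmem.2 (hsmall m hmmem.1 (by omega))
  -- counting argument: f ≤ 2 * genus - 1
  have hfle : f ≤ 6 * n + 1 := by
    set I := Finset.Ioo 0 f with hI
    have key : (I.filter (fun x => x ∉ G)).card ≤ (I.filter (fun x => x ∈ G)).card := by
      apply Finset.card_le_card_of_injOn (fun x => f - x)
      · intro x hx
        simp only [Finset.mem_coe, Finset.mem_filter, Finset.mem_Ioo, hI] at hx ⊢
        obtain ⟨⟨hx0, hxf⟩, hxG⟩ := hx
        refine ⟨⟨by omega, by omega⟩, ?_⟩
        rcases hG.2 f hfG x (f - x) hx0 (by omega) (by omega) with h | h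
        · exact absurd h hxG
        · exact h
      · intro x hx y hy hxy
        simp only [Finset.mem_coe, Finset.mem_filter, Finset.mem_Ioo, hI] at hx hy
        have hxy' : f - x = f - y := hxy
        omega
    have hsub : I.filter (fun x => x ∈ G) ⊆ G.erase f := by
      intro x hx
      simp only [Finset.mem_filter, Finset.mem_Ioo, hI] at hx
      exact Finset.mem_erase.mpr ⟨by omega, hx.2⟩
    have h1 : (I.filter (fun x => x ∈ G)).card ≤ G.card - 1 := by
      have := Finset.card_le_card hsub
      have := Finset.card_erase_of_mem hfG
      omega
    have h2 : (I.filter (fun x => x ∈ G)).card +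
        (I.filter (fun x => x ∉ G)).card = I.card :=
      Finset.card_filter_add_card_filter_not (p := fun x => x ∈ G)
    have h3 : I.card = f - 1 := by rw [hI, Nat.card_Ioo]; omega
    omega
  -- conclude
  have hlt : depth G < 5 := by
    have hmpos : 0 < m := hmmem.1
    have : (f + m) / m < 5 := (Nat.div_lt_iff_lt_mul hmpos).mpr (by omega)
    simpa [depth, hf, hm] using this
  omega
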